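/- Let μ* > 0, let A, B, C ∈ ℝ, let t ∈ ℝ, let K be a probability density function on [0,∞), and let λ ∈ ℂ with λ ≠ 0, Re(λ) > -μ*, and ∫_0^∞ e^{-Re(λ) φ} K(φ) dφ < ∞. Then ∫_0^∞ ( A · ∫_0^∞ e^{λ(t - s - φ)} K(φ) dφ ) e^{-μ* s} ds + ∫_0^∞ e^{-μ* s} · B · ( ∫_{t-s}^t C e^{λ x} dx ) ds = ( A · K̂(λ) / (μ* + λ) + B C / (μ* (μ* + λ)) ) · e^{λ t}, where K̂(λ) = ∫_0^∞ e^{-λ φ} K(φ) dφ. -/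

import Mathlib

open MeasureTheory Set Filter

lemma cexp_intOn (a : ℂ) (ha : 0 < a.re) :
    IntegrableOn (fun s : ℝ => Complex.exp (-(a * s))) (Set.Ioi 0) := by
  refine Integrable.mono' ((exp_neg_integrableOn_Ioi 0 ha)) ?_ ?_
  · exact (Complex.continuous_exp.comp ((continuous_const.mul Complex.continuous_ofReal).neg)).aestronglyMeasurable
  · filter_upwards with s
    simp [Complex.norm_exp, neg_mul]

lemma cexp_int (a : ℂ) (ha : 0 < a.re) :
    ∫ s in Set.Ioi (0:ℝ), Complex.exp (-(a * s)) = 1 / a := by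
  have ha0 : a ≠ 0 := fun h => by simp [h] at ha
  have hderiv : ∀ x ∈ Set.Ioi (0:ℝ),
      HasDerivAt (fun s : ℝ => -(Complex.exp (-(a * s)) / a)) (Complex.exp (-(a * x))) x := by
    intro x _
    have h1 : HasDerivAt (fun s : ℝ => Complex.exp (-(a * s))) (-a * Complex.exp (-(a * x))) x := by
      have h2 : HasDerivAt (fun s : ℝ => -(a * (s:ℂ))) (-a) x := by
        exact ((((hasDerivAt_id (x:ℂ)).const_mul a).comp_ofReal).neg).congr_deriv (by simp)
      exact ((Complex.hasDerivAt_exp _).comp x h2).congr_deriv (by ring)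
    have := (h1.div_const a).neg
    have heq : -(-a * Complex.exp (-(a * x)) / a) = Complex.exp (-(a * x)) := by
      field_simp
    rw [← heq]; exact this
  have htend : Tendsto (fun s : ℝ => -(Complex.exp (-(a * s)) / a)) atTop (nhds 0) := by
    have : Tendsto (fun s : ℝ => Complex.exp (-(a * s))) atTop (nhds 0) := by
      rw [tendsto_zero_iff_norm_tendsto_zero]
      have : (fun s : ℝ => ‖Complex.exp (-(a * s))‖) = fun s : ℝ => Real.exp (-a.re * s) := by
        funext s; simp [Complex.norm_exp, neg_mul]
      rw [this]
      exact Real.tendsto_exp_atBot.comp (tendsto_id.const_mul_atTop_of_neg (neg_lt_zero.mpr ha))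
    simpa using (this.div_const a).neg
  have := integral_Ioi_of_hasDerivAt_of_tendsto
    (f := fun s : ℝ => -(Complex.exp (-(a * s)) / a))
    (Continuous.continuousWithinAt (by continuity)) hderiv (cexp_intOn a ha) htend
  simp at this
  rw [this]; ring

/-- The Fréchet derivative `DG₁` applied to the exponential ansatz `e^{λt}`:
the combined delayed-recruitment and state-dependent-clearance terms evaluate
to `(A·K̂(λ)/(μ*+λ) + BC/(μ*(μ*+λ)))·e^{λt}`, where `K̂` is the Laplace
transform of the delay kernel `K`. -/
theorem stmt9
    (μstar : ℝ) (hμ : 0 < μstar) (A B C : ℝ) (t : ℝ)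
    (K : ℝ → ℝ)
    (hKmeas : Measurable K) (hKnonneg : ∀ φ : ℝ, 0 ≤ φ → 0 ≤ K φ)
    (hKint : ∫ φ in Set.Ioi (0 : ℝ), K φ = 1)
    (l : ℂ) (hl : l ≠ 0) (hre : -μstar < l.re)
    (hKlap : IntegrableOn (fun φ : ℝ => Real.exp (-l.re * φ) * K φ) (Set.Ioi 0)) :
    (∫ s in Set.Ioi (0 : ℝ),
        ((A : ℂ) * ∫ φ in Set.Ioi (0 : ℝ),
            Complex.exp (l * ((t : ℂ) - s - φ)) * (K φ : ℂ))
          * Complex.exp (-(μstar : ℂ) * s))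
      + (∫ s in Set.Ioi (0 : ℝ),
          Complex.exp (-(μstar : ℂ) * s) * (B : ℂ) *
            ∫ x in (t - s)..t, (C : ℂ) * Complex.exp (l * x))
      = ((A : ℂ) * (∫ φ in Set.Ioi (0 : ℝ), Complex.exp (-l * φ) * (K φ : ℂ))
            / ((μstar : ℂ) + l)
          + (B : ℂ) * (C : ℂ) / ((μstar : ℂ) * ((μstar : ℂ) + l)))
        * Complex.exp (l * t) := by
  set ν : ℂ := (μstar : ℂ) + l with hν_def
  have hνre : 0 < ν.re := by
    simp only [hν_def, Complex.add_re, Complex.ofReal_re]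
    linarith
  have hν0 : ν ≠ 0 := fun h => by simp [h] at hνre
  have hμ0 : (μstar : ℂ) ≠ 0 := by
    exact_mod_cast Complex.ofReal_ne_zero.mpr hμ.ne'
  have hμre : 0 < ((μstar : ℂ)).re := by simpa using hμ
  set Khat : ℂ := ∫ φ in Set.Ioi (0 : ℝ), Complex.exp (-l * φ) * (K φ : ℂ) with hKhat
  -- inner φ-integral
  have h1 : ∀ s : ℝ, (∫ φ in Set.Ioi (0 : ℝ),
      Complex.exp (l * ((t : ℂ) - s - φ)) * (K φ : ℂ))
      = Complex.exp (l * ((t : ℂ) - s)) * Khat := by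
    intro s
    rw [hKhat, ← integral_const_mul]
    congr 1
    funext φ
    rw [← mul_assoc, ← Complex.exp_add]
    ring_nf
  -- exponent combination
  have hcomb : ∀ s : ℝ, Complex.exp (l * ((t : ℂ) - s)) * Complex.exp (-(μstar : ℂ) * s)
      = Complex.exp (l * t) * Complex.exp (-(ν * s)) := by
    intro s
    rw [← Complex.exp_add, ← Complex.exp_add]
    congr 1
    rw [hν_def]; ring
  have hfirst : (∫ s in Set.Ioi (0 : ℝ),
      ((A : ℂ) * ∫ φ in Set.Ioi (0 : ℝ),
          Complex.exp (l * ((t : ℂ) - s - φ)) * (K φ : ℂ))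
        * Complex.exp (-(μstar : ℂ) * s))
      = (A : ℂ) * Khat * Complex.exp (l * t) * (1 / ν) := by
    have : (∫ s in Set.Ioi (0 : ℝ),
        ((A : ℂ) * ∫ φ in Set.Ioi (0 : ℝ),
            Complex.exp (l * ((t : ℂ) - s - φ)) * (K φ : ℂ))
          * Complex.exp (-(μstar : ℂ) * s))
        = ∫ s in Set.Ioi (0 : ℝ),
            ((A : ℂ) * Khat * Complex.exp (l * t)) * Complex.exp (-(ν * s)) := by
      congr 1
      funext s
      rw [h1 s]
      linear_combination ((A : ℂ) * Khat) * hcomb s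
    rw [this, integral_const_mul, cexp_int ν hνre]
  -- inner x-integral
  have h3 : ∀ s : ℝ, (∫ x in (t - s)..t, (C : ℂ) * Complex.exp (l * x))
      = (C : ℂ) * ((Complex.exp (l * t) - Complex.exp (l * ((t : ℂ) - s))) / l) := by
    intro s
    rw [intervalIntegral.integral_const_mul, integral_exp_mul_complex hl]
    push_cast
    ring_nf
  have hsecond : (∫ s in Set.Ioi (0 : ℝ),
      Complex.exp (-(μstar : ℂ) * s) * (B : ℂ) *
        ∫ x in (t - s)..t, (C : ℂ) * Complex.exp (l * x))
      = ((B : ℂ) * C / l * Complex.exp (l * t)) * (1 / (μstar : ℂ) - 1 / ν) := by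
    have heq : (∫ s in Set.Ioi (0 : ℝ),
        Complex.exp (-(μstar : ℂ) * s) * (B : ℂ) *
          ∫ x in (t - s)..t, (C : ℂ) * Complex.exp (l * x))
        = ∫ s in Set.Ioi (0 : ℝ),
            ((B : ℂ) * C / l * Complex.exp (l * t)) *
              (Complex.exp (-((μstar : ℂ) * s)) - Complex.exp (-(ν * s))) := by
      congr 1
      funext s
      rw [h3 s]
      have h4 := hcomb s
      rw [neg_mul] at h4 ⊢
      linear_combination (-(B : ℂ) * C / l) * h4
    rw [heq, integral_const_mul,
      integral_sub (cexp_intOn _ hμre) (cexp_intOn _ hνre),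
      cexp_int _ hμre, cexp_int _ hνre]
  rw [hfirst, hsecond]
  have hν0' : (μstar : ℂ) + l ≠ 0 := by rw [← hν_def]; exact hν0
  rw [hν_def]
  field_simp
  ring
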